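/- If a ≡ c (mod 9), b ≡ d (mod 9), and 9 divides bc - ad, then 3 divides both 2a + c and 2b + d, and 3 divides both a + 2c and b + 2d. Moreover, if additionally gcd(a,b) = 1, then 9 does not divide gcd(2a+c, 2b+d): the mediants are reduced by a factor of exactly 3. -/

import Mathlib

/-- If a ≡ c and b ≡ d (mod 9) and 9 ∣ bc - ad, then both mediants reduce by 3;
if moreover gcd(a,b) = 1, they reduce by a factor of exactly 3. -/
theorem mediants_reduce_by_exactly_three (a b c d : ℤ)
    (hac : a ≡ c [ZMOD 9]) (hbd : b ≡ d [ZMOD 9])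
    (h9 : (9 : ℤ) ∣ b * c - a * d) :
    ((3 : ℤ) ∣ 2 * a + c ∧ (3 : ℤ) ∣ 2 * b + d) ∧
    ((3 : ℤ) ∣ a + 2 * c ∧ (3 : ℤ) ∣ b + 2 * d) ∧
    (Int.gcd a b = 1 → ¬ (9 : ℤ) ∣ (Int.gcd (2 * a + c) (2 * b + d) : ℤ)) := by
  have h1 : (9:ℤ) ∣ c - a := Int.ModEq.dvd hac
  have h2 : (9:ℤ) ∣ d - b := Int.ModEq.dvd hbd
  refine ⟨⟨by omega, by omega⟩, ⟨by omega, by omega⟩, ?_⟩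
  intro hg hdvd
  have ha : (9:ℤ) ∣ 2 * a + c := hdvd.trans (Int.gcd_dvd_left _ _)
  have hb : (9:ℤ) ∣ 2 * b + d := hdvd.trans (Int.gcd_dvd_right _ _)
  have h3a : (3:ℤ) ∣ a := by omega
  have h3b : (3:ℤ) ∣ b := by omega
  have := Int.dvd_coe_gcd h3a h3b
  rw [hg] at this
  omega
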